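/- Every limit word of the Fibonacci word has the same set of finite subwords as the Fibonacci word itself: if u : ℤ → {0,1} is a pointwise limit of shifts S_{−h_k} v of the Fibonacci word v along a sequence h_k with |h_k| → ∞, then a finite word w is a subword of u if and only if it is a subword of v. -/

import Mathlib

noncomputable def alpha : ℝ := (Real.sqrt 5 - 1) / 2

noncomputable def v (n : ℤ) : ℕ :=
  if Int.fract ((n : ℝ) * alpha) ∈ Set.Ico (1 - alpha) 1 then 1 else 0

/-- `w` occurs in the two-sided word `u`. -/
def Occurs (u : ℤ → ℕ) (w : List ℕ) : Prop :=
  ∃ k : ℤ, ∀ i : ℕ, i < w.length → u (k + i) = w.getD i 0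

lemma alpha_pos : 0 < alpha := by
  have h : (2:ℝ) < Real.sqrt 5 := by
    nlinarith [Real.sq_sqrt (show (0:ℝ) ≤ 5 by norm_num), Real.sqrt_nonneg 5]
  unfold alpha; linarith

lemma alpha_lt_one : alpha < 1 := by
  have h : Real.sqrt 5 < 3 := by
    nlinarith [Real.sq_sqrt (show (0:ℝ) ≤ 5 by norm_num), Real.sqrt_nonneg 5]
  unfold alpha; linarith

lemma alpha_irrational : Irrational alpha := by
  have h5 := Nat.Prime.irrational_sqrt (show Nat.Prime 5 by norm_num)
  have h1 := h5.sub_ratCast (q := 1)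
  have h2 := h1.mul_ratCast (q := 0.5) (by norm_num)
  convert h2 using 1
  unfold alpha
  push_cast
  ring

/-- Starting anywhere, stepping by `b` hits `[0, |b|)` mod 1 within `⌈1/|b|⌉` steps. -/
lemma hit (b : ℝ) (hb : b ≠ 0) (t : ℝ) (ht0 : 0 ≤ t) (ht1 : t < 1) :
    ∃ j : ℕ, j ≤ ⌈1/|b|⌉₊ ∧ Int.fract (t + j * b) < |b| := by
  rcases le_or_gt 1 |b| with hbig | hsmall
  · refine ⟨0, Nat.zero_le _, ?_⟩
    have : Int.fract (t + (0:ℕ) * b) = t := by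
      simp [Int.fract_eq_self.2 ⟨ht0, ht1⟩]
    rw [this]; linarith
  rcases lt_or_gt_of_ne hb with hneg | hpos
  · -- b < 0, step downwards; land in [0, -b)
    have hcpos : (0:ℝ) < -b := by linarith
    have habs : |b| = -b := abs_of_neg hneg
    refine ⟨⌊t / (-b)⌋₊, ?_, ?_⟩
    · have hmono : t / (-b) ≤ 1 / (-b) := by gcongr
      calc ⌊t / (-b)⌋₊ ≤ ⌊1 / (-b)⌋₊ := Nat.floor_le_floor hmono
        _ ≤ ⌈1 / |b|⌉₊ := by rw [habs]; exact Nat.floor_le_ceil _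
    · have h1 : (⌊t / (-b)⌋₊ : ℝ) ≤ t / (-b) := Nat.floor_le (by positivity)
      have h2 : t / (-b) < ⌊t / (-b)⌋₊ + 1 := Nat.lt_floor_add_one _
      have h3 : (⌊t / (-b)⌋₊ : ℝ) * (-b) ≤ t := by
        rw [← le_div_iff₀ hcpos]; exact h1
      have h4 : t < ((⌊t / (-b)⌋₊ : ℝ) + 1) * (-b) := by
        rw [← div_lt_iff₀ hcpos]; exact h2
      have heq : Int.fract (t + ⌊t / (-b)⌋₊ * b) = t + ⌊t / (-b)⌋₊ * b := by
        apply Int.fract_eq_self.2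
        constructor <;> nlinarith
      rw [heq, habs]; nlinarith
  · -- b > 0, step upwards past 1; land in [0, b)
    have habs : |b| = b := abs_of_pos hpos
    have hnn : 0 ≤ (1 - t) / b := div_nonneg (by linarith) hpos.le
    refine ⟨⌈(1 - t) / b⌉₊, ?_, ?_⟩
    · rw [habs]
      apply Nat.ceil_le_ceil
      gcongr
      linarith
    · have h1 : (1 - t) / b ≤ (⌈(1 - t) / b⌉₊ : ℝ) := Nat.le_ceil _
      have h2 : (⌈(1 - t) / b⌉₊ : ℝ) < (1 - t) / b + 1 := Nat.ceil_lt_add_one hnn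
      have h3 : 1 ≤ t + (⌈(1 - t) / b⌉₊ : ℝ) * b := by
        rw [div_le_iff₀ hpos] at h1; nlinarith
      have h4 : t + (⌈(1 - t) / b⌉₊ : ℝ) * b < 1 + b := by
        have h5 : ((⌈(1 - t) / b⌉₊ : ℝ) - 1) * b < 1 - t := by
          rw [← lt_div_iff₀ hpos]; linarith
        nlinarith
      have heq : Int.fract (t + ⌈(1 - t) / b⌉₊ * b) =
          Int.fract (t + ⌈(1 - t) / b⌉₊ * b - (1:ℤ)) := (Int.fract_sub_intCast _ _).symm
      rw [heq, Int.fract_eq_self.2 (by push_cast; constructor <;> nlinarith), habs]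
      push_cast
      linarith

/-- The orbit of any point hits the arc `[k0·α, k0·α + ε)` within a bounded number of steps. -/
lemma syndetic (ε : ℝ) (hε : 0 < ε) (k0 : ℤ) :
    ∃ L : ℕ, ∀ m : ℤ, ∃ j : ℕ, j ≤ L ∧
      Int.fract (((m + j : ℤ) : ℝ) * alpha - (k0 : ℝ) * alpha) < ε := by
  obtain ⟨n, hn⟩ := exists_nat_gt (1 / ε)
  have hn1 : 0 < n + 1 := Nat.succ_pos n
  obtain ⟨p, q, hq0, hqn, hqa⟩ := Real.exists_int_int_abs_mul_sub_le alpha hn1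
  set b : ℝ := (q : ℝ) * alpha - p with hbdef
  have hb : b ≠ 0 := by
    intro h0
    have hq0' : (q : ℝ) ≠ 0 := by exact_mod_cast hq0.ne'
    have heq : alpha = ((p / q : ℚ) : ℝ) := by
      have : (q : ℝ) * alpha = p := by rw [hbdef] at h0; linarith [sub_eq_zero.1 h0]
      push_cast
      field_simp
      linarith [this]
    exact alpha_irrational ⟨_, heq.symm⟩
  have hbε : |b| < ε := by
    have h1 : (1 : ℝ) / ((n:ℝ) + 1 + 1) < ε := by
      rw [div_lt_iff₀ (by positivity)]
      rw [div_lt_iff₀ hε] at hn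
      nlinarith
    have h2 : |b| ≤ 1 / ((n:ℝ) + 1 + 1) := by
      have := hqa
      push_cast at this
      convert this using 2 <;> push_cast <;> ring
    linarith
  refine ⟨⌈1/|b|⌉₊ * q.toNat, fun m => ?_⟩
  set t : ℝ := Int.fract ((m : ℝ) * alpha - (k0 : ℝ) * alpha) with htdef
  obtain ⟨j, hjle, hjf⟩ := hit b hb t (Int.fract_nonneg _) (Int.fract_lt_one _)
  refine ⟨j * q.toNat, Nat.mul_le_mul_right _ hjle, ?_⟩
  have hfr : Int.fract (((m + (j * q.toNat : ℕ) : ℤ) : ℝ) * alpha - (k0 : ℝ) * alpha)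
      = Int.fract (t + j * b) := by
    rw [Int.fract_eq_fract]
    refine ⟨⌊(m : ℝ) * alpha - (k0 : ℝ) * alpha⌋ + j * p, ?_⟩
    have hqt : ((q.toNat : ℕ) : ℝ) = (q : ℝ) := by
      exact_mod_cast congrArg (fun z : ℤ => (z : ℝ)) (Int.toNat_of_nonneg hq0.le)
    have hte : t = (m : ℝ) * alpha - (k0 : ℝ) * alpha
        - ⌊(m : ℝ) * alpha - (k0 : ℝ) * alpha⌋ := rfl
    rw [hte, hbdef]
    push_cast
    rw [hqt]
    ring
  rw [hfr]
  linarith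

lemma v_eq (n : ℤ) :
    v n = if Int.fract ((n : ℝ) * alpha) ∈ Set.Ico (1 - alpha) 1 then 1 else 0 := rfl

/-- Stability: points on the circle slightly to the right of `k0·α` generate
the same length-`w` window. -/
lemma stability (w : List ℕ) (k0 : ℤ)
    (hk0 : ∀ i : ℕ, i < w.length → v (k0 + i) = w.getD i 0) (hw : 0 < w.length) :
    ∃ ε > 0, ∀ n : ℤ, Int.fract ((n : ℝ) * alpha - (k0 : ℝ) * alpha) < ε →
      ∀ i : ℕ, i < w.length → v (n + i) = w.getD i 0 := by
  classical
  set x : ℕ → ℝ := fun i => Int.fract (((k0 + i : ℤ) : ℝ) * alpha) with hx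
  set d : ℕ → ℝ := fun i =>
    if x i ∈ Set.Ico (1 - alpha) 1 then (1 : ℝ) else 1 - alpha with hd
  have hx0 : ∀ i, 0 ≤ x i := fun i => Int.fract_nonneg _
  have hx1 : ∀ i, x i < 1 := fun i => Int.fract_lt_one _
  have hdpos : ∀ i, d i = 1 ∨ d i = 1 - alpha := by
    intro i
    by_cases hmem : x i ∈ Set.Ico (1 - alpha) 1
    · left; simp only [hd, if_pos hmem]
    · right; simp only [hd, if_neg hmem]
  have hxd : ∀ i, x i < d i := by
    intro i
    by_cases hmem : x i ∈ Set.Ico (1 - alpha) 1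
    · simp only [hd, if_pos hmem]; exact hmem.2
    · simp only [hd, if_neg hmem]
      by_contra hc
      exact hmem ⟨by linarith [hx0 i], hx1 i⟩
  have hd1 : ∀ i, d i ≤ 1 := by
    intro i
    rcases hdpos i with h | h <;> rw [h] <;> linarith [alpha_pos]
  have hne : (Finset.range w.length).Nonempty := ⟨0, Finset.mem_range.2 hw⟩
  refine ⟨(Finset.range w.length).inf' hne (fun i => d i - x i), ?_, ?_⟩
  · rw [gt_iff_lt, Finset.lt_inf'_iff]
    intro i _
    linarith [hxd i]
  · intro n hn i hi
    set t : ℝ := Int.fract ((n : ℝ) * alpha - (k0 : ℝ) * alpha) with ht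
    have ht0 : 0 ≤ t := Int.fract_nonneg _
    have hti : t < d i - x i :=
      lt_of_lt_of_le hn (Finset.inf'_le _ (Finset.mem_range.2 hi))
    have hfr : Int.fract (((n + i : ℤ) : ℝ) * alpha) = x i + t := by
      have h1 : Int.fract (((n + i : ℤ) : ℝ) * alpha) = Int.fract (x i + t) := by
        rw [Int.fract_eq_fract]
        refine ⟨⌊((k0 + i : ℤ) : ℝ) * alpha⌋ + ⌊(n : ℝ) * alpha - (k0 : ℝ) * alpha⌋, ?_⟩
        have hxe : x i = ((k0 + i : ℤ) : ℝ) * alpha - ⌊((k0 + i : ℤ) : ℝ) * alpha⌋ := rfl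
        have hte : t = (n : ℝ) * alpha - (k0 : ℝ) * alpha
            - ⌊(n : ℝ) * alpha - (k0 : ℝ) * alpha⌋ := rfl
        rw [hxe, hte]
        push_cast
        ring
      have h2 : (0:ℝ) ≤ x i + t := add_nonneg (hx0 i) ht0
      have h3 : x i + t < 1 := by linarith [hti, hd1 i]
      rw [h1, Int.fract_eq_self.2 ⟨h2, h3⟩]
    have hvk := hk0 i hi
    rw [v_eq] at hvk ⊢
    rw [hfr]
    have hxval : Int.fract (((k0 + i : ℤ) : ℝ) * alpha) = x i := rfl
    rw [hxval] at hvk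
    by_cases hmem : x i ∈ Set.Ico (1 - alpha) 1
    · have hdval : d i = 1 := by simp only [hd, if_pos hmem]
      have hmem' : x i + t ∈ Set.Ico (1 - alpha) 1 := by
        refine ⟨by linarith [hmem.1], by rw [hdval] at hti; linarith⟩
      rw [if_pos hmem']
      rw [if_pos hmem] at hvk
      exact hvk
    · have hdval : d i = 1 - alpha := by simp only [hd, if_neg hmem]
      have hmem' : x i + t ∉ Set.Ico (1 - alpha) 1 := by
        intro hc
        rw [hdval] at hti
        linarith [hc.1]
      rw [if_neg hmem']
      rw [if_neg hmem] at hvk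
      exact hvk

theorem limit_words_have_same_subwords (u : ℤ → ℕ) (h : ℕ → ℤ)
    (hinf : Filter.Tendsto (fun k => |h k|) Filter.atTop Filter.atTop)
    (hlim : ∀ n : ℤ, ∀ᶠ k in Filter.atTop, v (n + h k) = u n) :
    ∀ w : List ℕ, (Occurs u w ↔ Occurs v w) := by
  intro w
  constructor
  · rintro ⟨k, hk⟩
    have hev : ∀ᶠ K in Filter.atTop, ∀ i ∈ Finset.range w.length,
        v ((k + i) + h K) = u (k + i) :=
      (Filter.eventually_all_finset _).2 (fun i _ => hlim (k + i))
    obtain ⟨K, hK⟩ := hev.exists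
    refine ⟨k + h K, fun i hi => ?_⟩
    have h1 := hK i (Finset.mem_range.2 hi)
    have h2 := hk i hi
    rw [show k + h K + (i : ℤ) = (k + i) + h K by ring, h1, h2]
  · rintro ⟨k0, hk0⟩
    rcases Nat.eq_zero_or_pos w.length with h0 | hpos
    · exact ⟨0, fun i hi => absurd hi (by omega)⟩
    obtain ⟨ε, hε, hstab⟩ := stability w k0 hk0 hpos
    obtain ⟨L, hL⟩ := syndetic ε hε k0
    have hev : ∀ᶠ K in Filter.atTop, ∀ n ∈ Finset.range (L + w.length),
        v ((n : ℤ) + h K) = u (n : ℤ) :=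
      (Filter.eventually_all_finset _).2 (fun n _ => hlim n)
    obtain ⟨K, hK⟩ := hev.exists
    obtain ⟨j, hjL, hjf⟩ := hL (h K)
    refine ⟨(j : ℤ), fun i hi => ?_⟩
    have hocc := hstab (h K + j) hjf i hi
    have hmem : j + i ∈ Finset.range (L + w.length) := Finset.mem_range.2 (by omega)
    have hKji := hK (j + i) hmem
    rw [show ((j : ℤ) + (i : ℕ)) = (((j + i : ℕ) : ℤ)) by push_cast; ring]
    rw [← hKji]
    rw [show (((j + i : ℕ) : ℤ)) + h K = h K + (j : ℤ) + (i : ℕ) by push_cast; ring]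
    exact hocc
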